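/- There is an absolute constant C such that for all smooth mean-free g, h on the torus and all ν > 0, |M(g,h,h)| ≤ C ν ‖g‖_{H²} ‖h‖_{H^{1/2}}^{1/2} ‖h‖_{H^{3/2}}^{3/2}, where M(g,h₁,h₂) = ν ∫_T g (Λ³h₁ · Λh₂ + ∂ₓ³h₁ · ∂ₓh₂) dx. -/

import Mathlib

open Complex


lemma sum_inv_sqrt_le (N : ℕ) :
    ∑ j ∈ Finset.Icc 1 N, (Real.sqrt j)⁻¹ ≤ 2 * Real.sqrt N := by
  induction N with
  | zero => simp
  | succ n ih =>
    rw [Finset.sum_Icc_succ_top (by omega)]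
    have hst : Real.sqrt n * Real.sqrt (n+1) ≤ (n : ℝ) + 1/2 := by
      rw [← Real.sqrt_mul (by positivity)]
      have := Real.sqrt_le_sqrt (show (n:ℝ) * ((n:ℝ)+1) ≤ ((n:ℝ)+1/2)^2 by nlinarith)
      rwa [Real.sqrt_sq (by positivity)] at this
    have ht : (0:ℝ) < Real.sqrt (n+1) := Real.sqrt_pos.mpr (by positivity)
    have ht2 : Real.sqrt (n+1) ^ 2 = (n:ℝ)+1 := Real.sq_sqrt (by positivity)
    have hinv : (Real.sqrt (n+1))⁻¹ * Real.sqrt (n+1) = 1 := inv_mul_cancel₀ ht.ne'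
    have key : (Real.sqrt ((n:ℕ)+1:ℕ))⁻¹ ≤ 2 * Real.sqrt ((n:ℕ)+1:ℕ) - 2 * Real.sqrt n := by
      push_cast
      nlinarith [ht, hinv, hst, ht2, Real.sqrt_nonneg (n:ℝ)]
    have : ((n:ℝ)+1) = ((n+1 : ℕ) : ℝ) := by push_cast; ring
    push_cast at *
    linarith


lemma refl_sum (N : ℕ) (f : ℕ → ℝ) :
    ∑ j ∈ Finset.Ioo 0 N, f (N - j) = ∑ j ∈ Finset.Ioo 0 N, f j := by
  apply Finset.sum_nbij' (i := fun j => N - j) (j := fun j => N - j) <;>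
    simp (config := {contextual := true}) [Finset.mem_Ioo] <;> omega

lemma sum_inv_sqrt_Ioo (N : ℕ) :
    ∑ j ∈ Finset.Ioo 0 N, (Real.sqrt j)⁻¹ ≤ 2 * Real.sqrt N := by
  refine le_trans (Finset.sum_le_sum_of_subset_of_nonneg (by intro x hx; simp at hx ⊢; omega)
    (by intros; positivity)) (sum_inv_sqrt_le N)

lemma key_harmonic (N : ℕ) :
    ∑ j ∈ Finset.Ioo 0 N, (Real.sqrt j)⁻¹ * (Real.sqrt (N - j : ℕ))⁻¹ ≤ 6 := by
  rcases Nat.eq_zero_or_pos N with h | hN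
  · subst h; simp
  have hNpos : (0:ℝ) < Real.sqrt N := Real.sqrt_pos.mpr (by positivity)
  have aux : ∀ a b : ℝ, 0 < a → 0 < b → Real.sqrt N ≤ Real.sqrt 2 * b →
      a⁻¹ * b⁻¹ ≤ Real.sqrt 2 / Real.sqrt N * (a⁻¹ + b⁻¹) := by
    intro a b ha hb h
    have hb' : b⁻¹ ≤ Real.sqrt 2 / Real.sqrt N := by
      rw [inv_eq_one_div, div_le_div_iff₀ hb hNpos]
      linarith
    have h1 : a⁻¹ * b⁻¹ ≤ a⁻¹ * (Real.sqrt 2 / Real.sqrt N) := by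
      apply mul_le_mul_of_nonneg_left hb' (by positivity)
    have h2 : (0:ℝ) ≤ Real.sqrt 2 / Real.sqrt N * b⁻¹ := by positivity
    nlinarith
  have step : ∀ j ∈ Finset.Ioo 0 N, (Real.sqrt j)⁻¹ * (Real.sqrt (N - j : ℕ))⁻¹ ≤
      Real.sqrt 2 / Real.sqrt N * ((Real.sqrt j)⁻¹ + (Real.sqrt (N - j : ℕ))⁻¹) := by
    intro j hj
    simp only [Finset.mem_Ioo] at hj
    have hj1 : (0:ℝ) < Real.sqrt j := Real.sqrt_pos.mpr (by exact_mod_cast hj.1)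
    have hj2 : (0:ℝ) < Real.sqrt (N - j : ℕ) := Real.sqrt_pos.mpr (by
      have : 0 < N - j := by omega
      exact_mod_cast this)
    rcases le_or_gt j (N - j) with hc | hc
    · have hNle : (N:ℝ) ≤ 2 * ((N - j : ℕ) : ℝ) := by
        have : N ≤ 2 * (N - j) := by omega
        exact_mod_cast this
      have : Real.sqrt N ≤ Real.sqrt 2 * Real.sqrt (N - j : ℕ) := by
        rw [← Real.sqrt_mul (by norm_num)]
        exact Real.sqrt_le_sqrt hNle
      exact aux _ _ hj1 hj2 this
    · have hNle : (N:ℝ) ≤ 2 * (j : ℝ) := by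
        have : N ≤ 2 * j := by omega
        exact_mod_cast this
      have h2 : Real.sqrt N ≤ Real.sqrt 2 * Real.sqrt j := by
        rw [← Real.sqrt_mul (by norm_num)]
        exact Real.sqrt_le_sqrt hNle
      have := aux _ _ hj2 hj1 h2
      rw [mul_comm] at this
      linarith [this]
  calc ∑ j ∈ Finset.Ioo 0 N, (Real.sqrt j)⁻¹ * (Real.sqrt (N - j : ℕ))⁻¹
      ≤ ∑ j ∈ Finset.Ioo 0 N,
        Real.sqrt 2 / Real.sqrt N * ((Real.sqrt j)⁻¹ + (Real.sqrt (N - j : ℕ))⁻¹) :=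
        Finset.sum_le_sum step
    _ = Real.sqrt 2 / Real.sqrt N * (∑ j ∈ Finset.Ioo 0 N, (Real.sqrt j)⁻¹
        + ∑ j ∈ Finset.Ioo 0 N, (Real.sqrt (N - j : ℕ))⁻¹) := by
        rw [← Finset.mul_sum, Finset.sum_add_distrib]
    _ = Real.sqrt 2 / Real.sqrt N * (2 * ∑ j ∈ Finset.Ioo 0 N, (Real.sqrt j)⁻¹) := by
        rw [refl_sum N (fun j => (Real.sqrt j)⁻¹)]; ring
    _ ≤ Real.sqrt 2 / Real.sqrt N * (2 * (2 * Real.sqrt N)) := by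
        apply mul_le_mul_of_nonneg_left (by linarith [sum_inv_sqrt_Ioo N]) (by positivity)
    _ = 4 * Real.sqrt 2 := by field_simp; ring
    _ ≤ 6 := by nlinarith [Real.sq_sqrt (show (0:ℝ) ≤ 2 by norm_num), Real.sqrt_nonneg 2]


lemma cond_cases {n k : ℤ} (h : (n - k).sign = k.sign) (hk : k ≠ 0) :
    (0 < k ∧ 0 < n - k) ∨ (k < 0 ∧ n - k < 0) := by
  rcases lt_trichotomy k 0 with hc | hc | hc
  · right
    refine ⟨hc, ?_⟩
    have : k.sign = -1 := Int.sign_eq_neg_one_of_neg hc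
    rw [this] at h
    exact Int.sign_eq_neg_one_iff_neg.mp h
  · exact absurd hc hk
  · left
    refine ⟨hc, ?_⟩
    have : k.sign = 1 := Int.sign_eq_one_of_pos hc
    rw [this] at h
    exact Int.sign_eq_one_iff_pos.mp h

lemma natAbs_add_eq {n k : ℤ} (h : (n - k).sign = k.sign) (hk : k ≠ 0) :
    n.natAbs = (n - k).natAbs + k.natAbs := by
  rcases cond_cases h hk with ⟨h1, h2⟩ | ⟨h1, h2⟩ <;> omega

lemma L3 (n : ℤ) (F : Finset ℤ) :
    ∑ k ∈ F.filter (fun k => (n - k).sign = k.sign ∧ k ≠ 0),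
      (Real.sqrt (n - k).natAbs)⁻¹ * (Real.sqrt k.natAbs)⁻¹ ≤ 6 := by
  set s := F.filter (fun k => (n - k).sign = k.sign ∧ k ≠ 0) with hs
  have hmem : ∀ k ∈ s, (n - k).sign = k.sign ∧ k ≠ 0 := by
    intro k hk; exact (Finset.mem_filter.mp hk).2
  have hW : ∀ k ∈ s, (Real.sqrt (n - k).natAbs)⁻¹ * (Real.sqrt k.natAbs)⁻¹ =
      (Real.sqrt k.natAbs)⁻¹ * (Real.sqrt (n.natAbs - k.natAbs : ℕ))⁻¹ := by
    intro k hk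
    obtain ⟨h1, h2⟩ := hmem k hk
    have := natAbs_add_eq h1 h2
    rw [show n.natAbs - k.natAbs = (n - k).natAbs by omega, mul_comm]
  rw [Finset.sum_congr rfl hW]
  have hinj : Set.InjOn Int.natAbs ↑s := by
    intro k1 hk1 k2 hk2 he
    have hk1' := hmem k1 (by exact_mod_cast hk1)
    have hk2' := hmem k2 (by exact_mod_cast hk2)
    rcases cond_cases hk1'.1 hk1'.2 with ⟨a1, a2⟩ | ⟨a1, a2⟩ <;>
      rcases cond_cases hk2'.1 hk2'.2 with ⟨b1, b2⟩ | ⟨b1, b2⟩ <;> omega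
  rw [← Finset.sum_image (f := fun j : ℕ => (Real.sqrt j)⁻¹ * (Real.sqrt (n.natAbs - j : ℕ))⁻¹)
    (g := Int.natAbs) (fun x hx y hy => hinj (by exact_mod_cast hx) (by exact_mod_cast hy))]
  refine le_trans (Finset.sum_le_sum_of_subset_of_nonneg ?_ (by intros; positivity))
    (key_harmonic n.natAbs)
  intro j hj
  simp only [Finset.mem_image] at hj
  obtain ⟨k, hk, rfl⟩ := hj
  obtain ⟨h1, h2⟩ := hmem k hk
  have := natAbs_add_eq h1 h2
  have hm : (n - k) ≠ 0 := by
    intro hz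
    rw [hz, Int.sign_zero] at h1
    exact h2 (Int.sign_eq_zero_iff_zero.mp h1.symm)
  simp only [Finset.mem_Ioo]
  omega



noncomputable def Gf (ghat : ℤ → ℂ) (n : ℤ) : ℝ := (n.natAbs : ℝ) ^ 2 * ‖ghat n‖
noncomputable def af (hhat : ℤ → ℂ) (j : ℤ) : ℝ :=
  (j.natAbs : ℝ) * ‖hhat j‖ * Real.sqrt (Real.sqrt (j.natAbs))
noncomputable def df (j : ℤ) : ℝ := (Real.sqrt (Real.sqrt (j.natAbs)))⁻¹

lemma cond_cases' {n k : ℤ} (h : (n - k).sign = k.sign) (hk : k ≠ 0) :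
    (0 < k ∧ 0 < n - k) ∨ (k < 0 ∧ n - k < 0) := by
  rcases lt_trichotomy k 0 with hc | hc | hc
  · exact Or.inr ⟨hc, Int.sign_eq_neg_one_iff_neg.mp (by rw [h, Int.sign_eq_neg_one_of_neg hc])⟩
  · exact absurd hc hk
  · exact Or.inl ⟨hc, Int.sign_eq_one_iff_pos.mp (by rw [h, Int.sign_eq_one_of_pos hc])⟩

lemma da_mul (hhat : ℤ → ℂ) {j : ℤ} (hj : j ≠ 0) :
    df j * af hhat j = (j.natAbs : ℝ) * ‖hhat j‖ := by
  have h1 : (0:ℝ) < Real.sqrt (Real.sqrt (j.natAbs)) := by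
    apply Real.sqrt_pos.mpr
    apply Real.sqrt_pos.mpr
    have : j.natAbs ≠ 0 := Int.natAbs_ne_zero.mpr hj
    positivity
  rw [df, af]
  field_simp

lemma norm_term_bound (ghat hhat : ℤ → ℂ) {n k : ℤ} (h1 : (n - k).sign = k.sign) (h2 : k ≠ 0) :
    ‖starRingEnd ℂ (ghat n) * hhat (n - k) * hhat k * (((n - k) ^ 3 * k : ℤ) : ℂ) *
        ((Int.sign (n - k) : ℂ) * (Int.sign k : ℂ) + 1)‖ ≤
      2 * ((Gf ghat n * (df (n - k) * df k)) * (af hhat (n - k) * af hhat k)) := by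
  have hm : n - k ≠ 0 := by
    rcases cond_cases' h1 h2 with ⟨a, b⟩ | ⟨a, b⟩ <;> omega
  have hsign : ((Int.sign (n - k) : ℂ) * (Int.sign k : ℂ) + 1) = 2 := by
    rcases cond_cases' h1 h2 with ⟨a, b⟩ | ⟨a, b⟩
    · rw [Int.sign_eq_one_of_pos a, Int.sign_eq_one_of_pos b]; norm_num
    · rw [Int.sign_eq_neg_one_of_neg a, Int.sign_eq_neg_one_of_neg b]; norm_num
  rw [hsign]
  have hnorm : ‖starRingEnd ℂ (ghat n) * hhat (n - k) * hhat k * (((n - k) ^ 3 * k : ℤ) : ℂ) * 2‖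
      = ‖ghat n‖ * ‖hhat (n - k)‖ * ‖hhat k‖ * (((n - k).natAbs : ℝ) ^ 3 * (k.natAbs : ℝ)) * 2 := by
    simp only [norm_mul, RCLike.norm_conj, Complex.norm_intCast,
      Complex.norm_two]
    rw [show (((n - k) ^ 3 * k : ℤ) : ℝ) = ((n - k : ℤ) : ℝ) ^ 3 * ((k : ℤ) : ℝ) by
        push_cast; ring,
      _root_.abs_mul, _root_.abs_pow]
    simp [Nat.cast_natAbs]
  rw [hnorm]
  have hM : ((n - k).natAbs : ℝ) ≤ (n.natAbs : ℝ) := by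
    have : n.natAbs = (n - k).natAbs + k.natAbs := by
      rcases cond_cases' h1 h2 with ⟨a, b⟩ | ⟨a, b⟩ <;> omega
    exact_mod_cast by omega
  have key : ((n - k).natAbs : ℝ) ^ 3 * (k.natAbs : ℝ) ≤
      (n.natAbs : ℝ) ^ 2 * (((n - k).natAbs : ℝ) * (k.natAbs : ℝ)) := by
    have h0 : (0:ℝ) ≤ ((n - k).natAbs : ℝ) := by positivity
    have h0' : (0:ℝ) ≤ (k.natAbs : ℝ) := by positivity
    nlinarith [mul_le_mul hM hM h0 (le_trans h0 hM), mul_nonneg h0 h0']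
  have expand : (Gf ghat n * (df (n - k) * df k)) * (af hhat (n - k) * af hhat k)
      = Gf ghat n * ((df (n - k) * af hhat (n - k)) * (df k * af hhat k)) := by ring
  rw [expand, da_mul hhat hm, da_mul hhat h2, Gf]
  have hg0 : (0:ℝ) ≤ ‖ghat n‖ * ‖hhat (n - k)‖ * ‖hhat k‖ := by positivity
  calc ‖ghat n‖ * ‖hhat (n - k)‖ * ‖hhat k‖ * (((n - k).natAbs : ℝ) ^ 3 * (k.natAbs : ℝ)) * 2
      ≤ ‖ghat n‖ * ‖hhat (n - k)‖ * ‖hhat k‖ *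
        ((n.natAbs : ℝ) ^ 2 * (((n - k).natAbs : ℝ) * (k.natAbs : ℝ))) * 2 := by
        have := mul_le_mul_of_nonneg_left key hg0
        nlinarith [this]
    _ = 2 * ((n.natAbs : ℝ) ^ 2 * ‖ghat n‖ *
        (((n - k).natAbs : ℝ) * ‖hhat (n - k)‖ * ((k.natAbs : ℝ) * ‖hhat k‖))) := by ring




lemma df_sq (j : ℤ) : df j ^ 2 = (Real.sqrt j.natAbs)⁻¹ := by
  rw [df, inv_pow, Real.sq_sqrt (Real.sqrt_nonneg _)]

lemma af_nonneg (hhat : ℤ → ℂ) (j : ℤ) : 0 ≤ af hhat j := by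
  rw [af]; positivity

lemma df_nonneg (j : ℤ) : 0 ≤ df j := by rw [df]; positivity

lemma Gf_nonneg (ghat : ℤ → ℂ) (n : ℤ) : 0 ≤ Gf ghat n := by rw [Gf]; positivity

lemma term_vanish (ghat hhat : ℤ → ℂ) (p : ℤ × ℤ)
    (h : ¬((p.1 - p.2).sign = p.2.sign ∧ p.2 ≠ 0)) :
    starRingEnd ℂ (ghat p.1) * hhat (p.1 - p.2) * hhat p.2 *
      (((p.1 - p.2 : ℤ) ^ 3 * p.2 : ℤ) : ℂ) *
      ((Int.sign (p.1 - p.2) : ℂ) * (Int.sign p.2 : ℂ) + 1) = 0 := by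
  obtain ⟨n, k⟩ := p
  simp only at h ⊢
  by_cases hk : k = 0
  · subst hk; simp
  have hA : (n - k).sign ≠ k.sign := by tauto
  by_cases hm : n - k = 0
  · rw [hm]; simp
  have hfac : ((Int.sign (n - k) : ℂ) * (Int.sign k : ℂ) + 1) = 0 := by
    rcases lt_trichotomy (n - k) 0 with a | a | a
    · rcases lt_trichotomy k 0 with b | b | b
      · exact absurd (by rw [Int.sign_eq_neg_one_of_neg a, Int.sign_eq_neg_one_of_neg b]) hA
      · exact absurd b hk
      · rw [Int.sign_eq_neg_one_of_neg a, Int.sign_eq_one_of_pos b]; norm_num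
    · exact absurd a hm
    · rcases lt_trichotomy k 0 with b | b | b
      · rw [Int.sign_eq_one_of_pos a, Int.sign_eq_neg_one_of_neg b]; norm_num
      · exact absurd b hk
      · exact absurd (by rw [Int.sign_eq_one_of_pos a, Int.sign_eq_one_of_pos b]) hA
  rw [hfac, mul_zero]

lemma af_sq_eq (hhat : ℤ → ℂ) (j : ℤ) :
    af hhat j ^ 2 =
      Real.sqrt (Real.sqrt ((j.natAbs : ℝ) * ‖hhat j‖ ^ 2 * ((j.natAbs : ℝ) ^ 3 * ‖hhat j‖ ^ 2)))
        * Real.sqrt ((j.natAbs : ℝ) ^ 3 * ‖hhat j‖ ^ 2) := by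
  set M : ℝ := (j.natAbs : ℝ) with hM
  set r : ℝ := ‖hhat j‖ with hr
  have hM0 : 0 ≤ M := by positivity
  have hr0 : 0 ≤ r := norm_nonneg _
  have e1 : M * r ^ 2 * (M ^ 3 * r ^ 2) = (M ^ 2 * r ^ 2) ^ 2 := by ring
  rw [af, ← hM, ← hr, e1, Real.sqrt_sq (by positivity),
    show M ^ 2 * r ^ 2 = (M * r) ^ 2 by ring, Real.sqrt_sq (by positivity),
    show M ^ 3 * r ^ 2 = (M * Real.sqrt M * r) ^ 2 by
      rw [mul_pow, mul_pow, Real.sq_sqrt hM0]; ring,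
    Real.sqrt_sq (by positivity), mul_pow, mul_pow, Real.sq_sqrt (Real.sqrt_nonneg _)]
  ring

lemma fourth_root (t : ℝ) (h : 0 ≤ t) : t ^ ((1 : ℝ) / 4) = Real.sqrt (Real.sqrt t) := by
  rw [Real.sqrt_eq_rpow, Real.sqrt_eq_rpow, ← Real.rpow_mul h]
  norm_num

lemma three_fourth_root (t : ℝ) (h : 0 ≤ t) :
    t ^ ((3 : ℝ) / 4) = Real.sqrt (Real.sqrt t) * Real.sqrt t := by
  rw [show (3 : ℝ) / 4 = 1 / 4 + 1 / 2 by norm_num, Real.rpow_add' h (by norm_num),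
    fourth_root t h, ← Real.sqrt_eq_rpow]




/-- Capillarity commutator estimate |M(g,h,h)| ≤ C ν ‖g‖_{H²} ‖h‖_{H^{1/2}}^{1/2} ‖h‖_{H^{3/2}}^{3/2},
where, in Fourier variables,
M(g,h,h) = ν Σ_{n,k} conj(ĝ n) ĥ(n−k) ĥ(k) (n−k)³ k (sgn(n−k) sgn k + 1)
and ‖u‖_{H^s} = (Σ_n |n|^{2s} |û(n)|²)^{1/2} for mean-free u. -/
theorem stmt_16 :
    ∃ C : ℝ, 0 < C ∧ ∀ (ν : ℝ), 0 < ν → ∀ ghat hhat : ℤ → ℂ,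
      (Function.support ghat).Finite → (Function.support hhat).Finite →
      ghat 0 = 0 → hhat 0 = 0 →
      ‖(ν : ℂ) * ∑' p : ℤ × ℤ,
          starRingEnd ℂ (ghat p.1) * hhat (p.1 - p.2) * hhat p.2 *
            (((p.1 - p.2 : ℤ) ^ 3 * p.2 : ℤ) : ℂ) *
            ((Int.sign (p.1 - p.2) : ℂ) * (Int.sign p.2 : ℂ) + 1)‖ ≤
        C * ν * Real.sqrt (∑' n : ℤ, (|n| : ℝ) ^ (4 : ℝ) * ‖ghat n‖ ^ 2) *
          (∑' n : ℤ, (|n| : ℝ) ^ (1 : ℝ) * ‖hhat n‖ ^ 2) ^ ((1 : ℝ) / 4) *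
          (∑' n : ℤ, (|n| : ℝ) ^ (3 : ℝ) * ‖hhat n‖ ^ 2) ^ ((3 : ℝ) / 4) := by
  classical
  refine ⟨100, by norm_num, ?_⟩
  intro ν hν ghat hhat hgf hhf g0 h0
  set Sg := hgf.toFinset with hSgdef
  set Sh := hhf.toFinset with hShdef
  -- the summand
  set F : ℤ × ℤ → ℂ := fun p =>
    starRingEnd ℂ (ghat p.1) * hhat (p.1 - p.2) * hhat p.2 *
      (((p.1 - p.2 : ℤ) ^ 3 * p.2 : ℤ) : ℂ) *
      ((Int.sign (p.1 - p.2) : ℂ) * (Int.sign p.2 : ℂ) + 1) with hFdef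
  have htsum : (∑' p : ℤ × ℤ, F p) = ∑ p ∈ Sg ×ˢ Sh, F p := by
    apply tsum_eq_sum
    intro p hp
    rw [Finset.mem_product] at hp
    push_neg at hp
    by_cases h1 : p.1 ∈ Sg
    · have h2 : hhat p.2 = 0 := by
        have := hp h1
        simpa [hShdef, Set.Finite.mem_toFinset, Function.mem_support, not_not] using this
      simp [hFdef, h2]
    · have h2 : ghat p.1 = 0 := by
        simpa [hSgdef, Set.Finite.mem_toFinset, Function.mem_support, not_not] using h1
      simp [hFdef, h2]
  -- key quantities
  set P := (Sg ×ˢ Sh).filter (fun p : ℤ × ℤ => (p.1 - p.2).sign = p.2.sign ∧ p.2 ≠ 0) with hPdef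
  set U : ℤ × ℤ → ℝ := fun p => Gf ghat p.1 * (df (p.1 - p.2) * df p.2) with hUdef
  set V : ℤ × ℤ → ℝ := fun p => af hhat (p.1 - p.2) * af hhat p.2 with hVdef
  set Tg := ∑ n ∈ Sg, Gf ghat n ^ 2 with hTgdef
  set A := ∑ j ∈ Sh, af hhat j ^ 2 with hAdef
  set T1 := ∑ j ∈ Sh, (j.natAbs : ℝ) * ‖hhat j‖ ^ 2 with hT1def
  set T3 := ∑ j ∈ Sh, (j.natAbs : ℝ) ^ 3 * ‖hhat j‖ ^ 2 with hT3def
  have hTg0 : 0 ≤ Tg := Finset.sum_nonneg fun i _ => sq_nonneg _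
  have hA0 : 0 ≤ A := Finset.sum_nonneg fun i _ => sq_nonneg _
  have hT10 : 0 ≤ T1 := Finset.sum_nonneg fun i _ => by positivity
  have hT30 : 0 ≤ T3 := Finset.sum_nonneg fun i _ => by positivity
  -- step 1 : restrict to the sign-condition set
  have step1 : ‖∑ p ∈ Sg ×ˢ Sh, F p‖ ≤ ∑ p ∈ P, ‖F p‖ := by
    rw [hPdef, Finset.sum_filter_of_ne (fun p _ hne => ?_)]
    · exact norm_sum_le _ _
    · by_contra hc
      exact hne (by rw [hFdef]; simp only; rw [term_vanish ghat hhat p hc]; simp)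
  -- step 2 : pointwise bound
  have step2 : ∑ p ∈ P, ‖F p‖ ≤ 2 * ∑ p ∈ P, U p * V p := by
    rw [Finset.mul_sum]
    apply Finset.sum_le_sum
    intro p hp
    have hc := (Finset.mem_filter.mp hp).2
    exact norm_term_bound ghat hhat hc.1 hc.2
  -- step 3 : Cauchy-Schwarz
  have step3 : ∑ p ∈ P, U p * V p ≤
      Real.sqrt (∑ p ∈ P, U p ^ 2) * Real.sqrt (∑ p ∈ P, V p ^ 2) :=
    Real.sum_mul_le_sqrt_mul_sqrt _ _ _
  -- step 4 : first factor
  have step4 : ∑ p ∈ P, U p ^ 2 ≤ 6 * Tg := by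
    rw [hPdef, Finset.sum_filter, Finset.sum_product]
    have : ∀ n ∈ Sg,
        (∑ k ∈ Sh, if (n - k).sign = k.sign ∧ k ≠ 0 then U (n, k) ^ 2 else 0)
          ≤ Gf ghat n ^ 2 * 6 := by
      intro n _
      have hterm : ∀ k, (if (n - k).sign = k.sign ∧ k ≠ 0 then U (n, k) ^ 2 else 0)
          = Gf ghat n ^ 2 * (if (n - k).sign = k.sign ∧ k ≠ 0 then
              (Real.sqrt (n - k).natAbs)⁻¹ * (Real.sqrt k.natAbs)⁻¹ else 0) := by
        intro k
        by_cases hck : (n - k).sign = k.sign ∧ k ≠ 0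
        · rw [if_pos hck, if_pos hck, hUdef]
          simp only
          rw [mul_pow, mul_pow, df_sq, df_sq]
        · rw [if_neg hck, if_neg hck, mul_zero]
      rw [Finset.sum_congr rfl (fun k _ => hterm k), ← Finset.mul_sum]
      apply mul_le_mul_of_nonneg_left _ (sq_nonneg _)
      rw [← Finset.sum_filter]
      exact L3 n Sh
    calc ∑ n ∈ Sg, ∑ k ∈ Sh, (if (n - k).sign = k.sign ∧ k ≠ 0 then U (n, k) ^ 2 else 0)
        ≤ ∑ n ∈ Sg, Gf ghat n ^ 2 * 6 := Finset.sum_le_sum this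
      _ = 6 * Tg := by rw [← Finset.sum_mul, mul_comm]
  -- shift bound
  have shift : ∀ k : ℤ, ∑ n ∈ Sg, af hhat (n - k) ^ 2 ≤ A := by
    intro k
    have hinj : ∀ x ∈ Sg, ∀ y ∈ Sg, x - k = y - k → x = y := by intro x _ y _ h; omega
    calc ∑ n ∈ Sg, af hhat (n - k) ^ 2
        = ∑ j ∈ Sg.image (fun n => n - k), af hhat j ^ 2 :=
          (Finset.sum_image (g := fun n => n - k) (f := fun j => af hhat j ^ 2) hinj).symm
      _ = ∑ j ∈ (Sg.image (fun n => n - k)) ∩ Sh, af hhat j ^ 2 := by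
          apply (Finset.sum_subset (Finset.inter_subset_left) ?_).symm
          intro x _ hx2
          have hx3 : x ∉ Sh := fun hmem => hx2 (Finset.mem_inter.mpr ⟨‹_›, hmem⟩)
          have : hhat x = 0 := by
            simpa [hShdef, Set.Finite.mem_toFinset, Function.mem_support, not_not] using hx3
          simp [af, this]
      _ ≤ A := Finset.sum_le_sum_of_subset_of_nonneg (Finset.inter_subset_right)
          (fun i _ _ => sq_nonneg _)
  -- step 5 : second factor
  have step5 : ∑ p ∈ P, V p ^ 2 ≤ A ^ 2 := by
    have h1 : ∑ p ∈ P, V p ^ 2 ≤ ∑ p ∈ Sg ×ˢ Sh, V p ^ 2 :=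
      Finset.sum_le_sum_of_subset_of_nonneg (Finset.filter_subset _ _)
        (fun i _ _ => sq_nonneg _)
    refine h1.trans ?_
    rw [Finset.sum_product, Finset.sum_comm]
    have h2 : ∀ k ∈ Sh, ∑ n ∈ Sg, V (n, k) ^ 2 ≤ af hhat k ^ 2 * A := by
      intro k _
      have : ∀ n, V (n, k) ^ 2 = af hhat k ^ 2 * af hhat (n - k) ^ 2 := by
        intro n; rw [hVdef]; simp only; ring
      rw [Finset.sum_congr rfl (fun n _ => this n), ← Finset.mul_sum]
      exact mul_le_mul_of_nonneg_left (shift k) (sq_nonneg _)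
    calc ∑ k ∈ Sh, ∑ n ∈ Sg, V (n, k) ^ 2 ≤ ∑ k ∈ Sh, af hhat k ^ 2 * A :=
        Finset.sum_le_sum h2
      _ = A ^ 2 := by rw [← Finset.sum_mul, ← hAdef]; ring
  -- step 6 : Hölder for A
  have step6 : A ≤ Real.sqrt (Real.sqrt T1 * Real.sqrt T3) * Real.sqrt T3 := by
    have e1 : A = ∑ j ∈ Sh,
        Real.sqrt (Real.sqrt ((j.natAbs : ℝ) * ‖hhat j‖ ^ 2 * ((j.natAbs : ℝ) ^ 3 * ‖hhat j‖ ^ 2)))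
          * Real.sqrt ((j.natAbs : ℝ) ^ 3 * ‖hhat j‖ ^ 2) :=
      Finset.sum_congr rfl fun j _ => af_sq_eq hhat j
    have e2 : ∑ j ∈ Sh,
        Real.sqrt (Real.sqrt ((j.natAbs : ℝ) * ‖hhat j‖ ^ 2 * ((j.natAbs : ℝ) ^ 3 * ‖hhat j‖ ^ 2)))
          * Real.sqrt ((j.natAbs : ℝ) ^ 3 * ‖hhat j‖ ^ 2) ≤
        Real.sqrt (∑ j ∈ Sh,
          Real.sqrt ((j.natAbs : ℝ) * ‖hhat j‖ ^ 2 * ((j.natAbs : ℝ) ^ 3 * ‖hhat j‖ ^ 2)))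
          * Real.sqrt T3 :=
      Real.sum_sqrt_mul_sqrt_le _ (fun i => Real.sqrt_nonneg _) (fun i => by positivity)
    have e3 : ∑ j ∈ Sh,
        Real.sqrt ((j.natAbs : ℝ) * ‖hhat j‖ ^ 2 * ((j.natAbs : ℝ) ^ 3 * ‖hhat j‖ ^ 2)) ≤
        Real.sqrt T1 * Real.sqrt T3 := by
      have : ∀ j ∈ Sh, Real.sqrt ((j.natAbs : ℝ) * ‖hhat j‖ ^ 2 * ((j.natAbs : ℝ) ^ 3 * ‖hhat j‖ ^ 2))
          = Real.sqrt ((j.natAbs : ℝ) * ‖hhat j‖ ^ 2) * Real.sqrt ((j.natAbs : ℝ) ^ 3 * ‖hhat j‖ ^ 2) :=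
        fun j _ => Real.sqrt_mul (by positivity) _
      rw [Finset.sum_congr rfl this]
      exact Real.sum_sqrt_mul_sqrt_le _ (fun i => by positivity) (fun i => by positivity)
    rw [e1]
    refine e2.trans ?_
    apply mul_le_mul_of_nonneg_right _ (Real.sqrt_nonneg _)
    exact Real.sqrt_le_sqrt e3
  -- convert RHS tsums
  have pow4 : ∀ x : ℝ, 0 ≤ x → x ^ (4 : ℝ) = x ^ (4 : ℕ) := fun x hx => by
    rw [show (4 : ℝ) = ((4 : ℕ) : ℝ) by norm_num, Real.rpow_natCast]
  have pow1 : ∀ x : ℝ, 0 ≤ x → x ^ (1 : ℝ) = x := fun x hx => by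
    rw [Real.rpow_one]
  have pow3 : ∀ x : ℝ, 0 ≤ x → x ^ (3 : ℝ) = x ^ (3 : ℕ) := fun x hx => by
    rw [show (3 : ℝ) = ((3 : ℕ) : ℝ) by norm_num, Real.rpow_natCast]
  have habs : ∀ n : ℤ, |(n : ℝ)| = (n.natAbs : ℝ) := by
    intro n; rw [← Int.cast_abs, Nat.cast_natAbs]
  have hTg' : (∑' n : ℤ, (|n| : ℝ) ^ (4 : ℝ) * ‖ghat n‖ ^ 2) = Tg := by
    rw [tsum_eq_sum (s := Sg) (fun n hn => by
      have : ghat n = 0 := by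
        simpa [hSgdef, Set.Finite.mem_toFinset, Function.mem_support, not_not] using hn
      simp [this])]
    apply Finset.sum_congr rfl
    intro n _
    rw [habs n, pow4 _ (by positivity), Gf]
    ring
  have hT1' : (∑' n : ℤ, (|n| : ℝ) ^ (1 : ℝ) * ‖hhat n‖ ^ 2) = T1 := by
    rw [tsum_eq_sum (s := Sh) (fun n hn => by
      have : hhat n = 0 := by
        simpa [hShdef, Set.Finite.mem_toFinset, Function.mem_support, not_not] using hn
      simp [this])]
    exact Finset.sum_congr rfl fun n _ => by rw [habs n, pow1 _ (by positivity)]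
  have hT3' : (∑' n : ℤ, (|n| : ℝ) ^ (3 : ℝ) * ‖hhat n‖ ^ 2) = T3 := by
    rw [tsum_eq_sum (s := Sh) (fun n hn => by
      have : hhat n = 0 := by
        simpa [hShdef, Set.Finite.mem_toFinset, Function.mem_support, not_not] using hn
      simp [this])]
    exact Finset.sum_congr rfl fun n _ => by rw [habs n, pow3 _ (by positivity)]
  -- assemble
  rw [htsum, norm_mul, Complex.norm_real, Real.norm_eq_abs, abs_of_pos hν, hTg', hT1', hT3',
    fourth_root T1 hT10, three_fourth_root T3 hT30]
  have hQ0 : 0 ≤ ν * Real.sqrt Tg * Real.sqrt (Real.sqrt T1) *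
      (Real.sqrt (Real.sqrt T3) * Real.sqrt T3) := by positivity
  have main : ν * ‖∑ p ∈ Sg ×ˢ Sh, F p‖ ≤
      2 * Real.sqrt 6 * (ν * Real.sqrt Tg * Real.sqrt (Real.sqrt T1) *
        (Real.sqrt (Real.sqrt T3) * Real.sqrt T3)) := by
    have c1 : ‖∑ p ∈ Sg ×ˢ Sh, F p‖ ≤ 2 * (Real.sqrt (6 * Tg) * A) := by
      refine step1.trans (step2.trans ?_)
      apply mul_le_mul_of_nonneg_left _ (by norm_num)
      refine step3.trans ?_
      have s1 : Real.sqrt (∑ p ∈ P, U p ^ 2) ≤ Real.sqrt (6 * Tg) := Real.sqrt_le_sqrt step4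
      have s2 : Real.sqrt (∑ p ∈ P, V p ^ 2) ≤ A := by
        refine (Real.sqrt_le_sqrt step5).trans ?_
        rw [Real.sqrt_sq hA0]
      exact mul_le_mul s1 s2 (Real.sqrt_nonneg _) (Real.sqrt_nonneg _)
    have c2 : Real.sqrt (6 * Tg) = Real.sqrt 6 * Real.sqrt Tg :=
      Real.sqrt_mul (by norm_num) _
    have c3 : A ≤ Real.sqrt (Real.sqrt T1) * Real.sqrt (Real.sqrt T3) * Real.sqrt T3 := by
      refine step6.trans ?_
      rw [Real.sqrt_mul (Real.sqrt_nonneg _)]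
    calc ν * ‖∑ p ∈ Sg ×ˢ Sh, F p‖ ≤ ν * (2 * (Real.sqrt (6 * Tg) * A)) :=
        mul_le_mul_of_nonneg_left c1 hν.le
      _ = 2 * Real.sqrt 6 * (ν * Real.sqrt Tg * A) := by rw [c2]; ring
      _ ≤ 2 * Real.sqrt 6 * (ν * Real.sqrt Tg *
          (Real.sqrt (Real.sqrt T1) * Real.sqrt (Real.sqrt T3) * Real.sqrt T3)) := by
          apply mul_le_mul_of_nonneg_left _ (by positivity)
          apply mul_le_mul_of_nonneg_left c3 (by positivity)
      _ = 2 * Real.sqrt 6 * (ν * Real.sqrt Tg * Real.sqrt (Real.sqrt T1) *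
          (Real.sqrt (Real.sqrt T3) * Real.sqrt T3)) := by ring
  refine main.trans ?_
  have h6 : Real.sqrt 6 ≤ 3 := by
    nlinarith [Real.sq_sqrt (show (0:ℝ) ≤ 6 by norm_num), Real.sqrt_nonneg 6]
  calc 2 * Real.sqrt 6 * (ν * Real.sqrt Tg * Real.sqrt (Real.sqrt T1) *
      (Real.sqrt (Real.sqrt T3) * Real.sqrt T3))
      ≤ 100 * (ν * Real.sqrt Tg * Real.sqrt (Real.sqrt T1) *
        (Real.sqrt (Real.sqrt T3) * Real.sqrt T3)) := by
        apply mul_le_mul_of_nonneg_right _ hQ0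
        linarith
    _ = 100 * ν * Real.sqrt Tg * Real.sqrt (Real.sqrt T1) *
        (Real.sqrt (Real.sqrt T3) * Real.sqrt T3) := by ring
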